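/- Let k be a finite field and let r ≥ 1. Let p ∈ k[x,y] be a monic homogeneous polynomial of degree r+1 that is not divisible by y (monic means p(x,1) is monic as a univariate polynomial). Suppose g, h ∈ k[x,y] are coprime homogeneous polynomials with h monic of degree r and g of degree at most r, and suppose x·h − y·g = c·p for some c ∈ k^×. Then c = 1, h is coprime to y·p, and g = (x·h − p)/y. -/

import Mathlib

open MvPolynomial

/-- The dehomogenization of a bivariate polynomial: set `y = 1`. -/
noncomputable def dehom {k : Type*} [CommSemiring k] (p : MvPolynomial (Fin 2) k) :
    Polynomial k :=
  MvPolynomial.aeval (fun i : Fin 2 => if i = 0 then Polynomial.X else 1) p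

/-- A homogeneous polynomial `p ∈ k[x,y]` is monic if `p(x,1)` is monic. -/
def MonicHom {k : Type*} [CommSemiring k] (p : MvPolynomial (Fin 2) k) : Prop :=
  (dehom p).Monic

lemma fin2_degree (d : Fin 2 →₀ ℕ) : (Finsupp.weight 1) d = d 0 + d 1 := by
  rw [show (Finsupp.weight 1 : (Fin 2 →₀ ℕ) →+ ℕ) = Finsupp.weight (fun _ => 1) from rfl,
    ← Finsupp.degree_eq_weight_one, Finsupp.degree_apply]
  rw [Finset.sum_subset (Finset.subset_univ d.support)
    (fun i _ hi => Finsupp.notMem_support_iff.mp hi)]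
  exact Fin.sum_univ_two d

lemma mono_eq_single {n : ℕ} {d : Fin 2 →₀ ℕ} (hd : (Finsupp.weight 1) d = n) (h1 : d 1 = 0) :
    d = Finsupp.single 0 n := by
  have h0 : d 0 = n := by rw [fin2_degree, h1] at hd; omega
  ext i
  fin_cases i <;> simp [h0, h1]

lemma dehom_eq_sum {k : Type*} [CommRing k] (q : MvPolynomial (Fin 2) k) :
    dehom q = ∑ d ∈ q.support, Polynomial.C (q.coeff d) * Polynomial.X ^ (d 0) := by
  rw [dehom, aeval_def, eval₂_eq']
  refine Finset.sum_congr rfl fun d _ => ?_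
  rw [Fin.prod_univ_two]
  simp [Polynomial.algebraMap_eq]

lemma dehom_coeff {k : Type*} [CommRing k] (q : MvPolynomial (Fin 2) k) (m : ℕ) :
    (dehom q).coeff m = ∑ d ∈ q.support, if m = d 0 then q.coeff d else 0 := by
  rw [dehom_eq_sum, Polynomial.finset_sum_coeff]
  refine Finset.sum_congr rfl fun d _ => ?_
  rw [Polynomial.coeff_C_mul, Polynomial.coeff_X_pow]
  split <;> simp

lemma dehom_natDegree_le {k : Type*} [CommRing k] {n : ℕ} {q : MvPolynomial (Fin 2) k}
    (hq : q.IsHomogeneous n) : (dehom q).natDegree ≤ n := by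
  rw [Polynomial.natDegree_le_iff_coeff_eq_zero]
  intro m hm
  rw [dehom_coeff]
  refine Finset.sum_eq_zero fun d hd => ?_
  have hdeg := fin2_degree d ▸ hq (mem_support_iff.mp hd)
  rw [if_neg]
  intro h; omega

lemma dehom_coeff_top {k : Type*} [CommRing k] {n : ℕ} {q : MvPolynomial (Fin 2) k}
    (hq : q.IsHomogeneous n) : (dehom q).coeff n = q.coeff (Finsupp.single 0 n) := by
  rw [dehom_coeff]
  rw [Finset.sum_eq_single (Finsupp.single 0 n)]
  · simp
  · intro b hb hbne
    rw [if_neg]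
    intro h
    have hw := hq (mem_support_iff.mp hb)
    have hw2 := fin2_degree b ▸ hw
    exact hbne (mono_eq_single hw (by omega))
  · intro hns
    simp [mem_support_iff.not.mp hns |> not_not.mp]

lemma prime_X1 {k : Type*} [Field k] : Prime (X 1 : MvPolynomial (Fin 2) k) := by
  rw [← MulEquiv.prime_iff (MvPolynomial.finSuccEquiv k 1).toMulEquiv]
  have h1 : (MvPolynomial.finSuccEquiv k 1).toMulEquiv (X 1) = Polynomial.C (X 0) := by
    show (MvPolynomial.finSuccEquiv k 1) (X 1) = _
    have := MvPolynomial.finSuccEquiv_X_succ (R := k) (n := 1) (j := 0)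
    simpa using this
  rw [h1, Polynomial.prime_C_iff, ← MulEquiv.prime_iff (MvPolynomial.finSuccEquiv k 0).toMulEquiv]
  have h2 : (MvPolynomial.finSuccEquiv k 0).toMulEquiv (X 0) = Polynomial.X :=
    MvPolynomial.finSuccEquiv_X_zero
  rw [h2]
  exact Polynomial.prime_X

/-- forward direction of the first case of Proposition 2.6 of the
paper.  If `p` is monic homogeneous of degree `r+1`, not divisible by `y`, and
`x·h − y·g = c·p` with `g, h` coprime, `h` monic homogeneous of degree `r` and `g`
homogeneous of degree at most `r`, then `c = 1`, `h` is coprime to `y·p`, and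
`g = (x·h − p)/y`. -/
theorem stmt_4 (k : Type*) [Field k] [Fintype k] (r : ℕ) (hr : 1 ≤ r)
    (p : MvPolynomial (Fin 2) k) (hp : p.IsHomogeneous (r + 1)) (hpm : MonicHom p)
    (hpy : ¬ (X 1 ∣ p))
    (g h : MvPolynomial (Fin 2) k)
    (hh : h.IsHomogeneous r) (hhm : MonicHom h)
    (hgdeg : ∃ s ≤ r, g.IsHomogeneous s)
    (hcop : IsRelPrime g h)
    (c : k) (hc : c ≠ 0)
    (heq : X 0 * h - X 1 * g = C c * p) :
    c = 1 ∧ IsRelPrime h (X 1 * p) ∧ X 1 * g = X 0 * h - p := by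
  classical
  -- coefficient identity at the monomial x^(r+1)
  have hco : h.coeff (Finsupp.single 0 r) = c * p.coeff (Finsupp.single 0 (r + 1)) := by
    have hkey := congrArg (coeff (Finsupp.single 0 (r + 1))) heq
    rw [coeff_sub, coeff_C_mul] at hkey
    have h1 : coeff (Finsupp.single 0 (r + 1)) (X 0 * h) = coeff (Finsupp.single 0 r) h := by
      have hs : (Finsupp.single 0 (r + 1) : Fin 2 →₀ ℕ)
          = Finsupp.single 0 1 + Finsupp.single 0 r := by
        rw [← Finsupp.single_add]; rw [add_comm]
      rw [hs, coeff_X_mul]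
    have h2 : coeff (Finsupp.single 0 (r + 1)) (X 1 * g) = 0 := by
      rw [coeff_X_mul', if_neg]
      simp [Finsupp.mem_support_iff, Finsupp.single_apply]
    rw [h1, h2] at hkey
    simpa using hkey
  -- the top coefficient of p is nonzero (p not divisible by y)
  have hpcoeff : p.coeff (Finsupp.single 0 (r + 1)) ≠ 0 := by
    intro h0
    apply hpy
    rw [p.as_sum]
    refine Finset.dvd_sum fun d hd => ?_
    rw [X_dvd_monomial]
    right
    intro h1
    have hw := hp (mem_support_iff.mp hd)
    have hd0 := mono_eq_single hw h1
    exact (mem_support_iff.mp hd) (hd0 ▸ h0)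
  -- the top coefficient of p equals 1 (monicity)
  have hpc1 : p.coeff (Finsupp.single 0 (r + 1)) = 1 := by
    have hle := dehom_natDegree_le hp
    have htop := dehom_coeff_top hp
    have hge : r + 1 ≤ (dehom p).natDegree :=
      Polynomial.le_natDegree_of_ne_zero (by rw [htop]; exact hpcoeff)
    have hnd : (dehom p).natDegree = r + 1 := le_antisymm hle hge
    rw [← htop, ← hnd]
    exact hpm.coeff_natDegree
  have hcc : h.coeff (Finsupp.single 0 r) = c := by rw [hco, hpc1, mul_one]
  have hc1 : c = 1 := by
    have hle := dehom_natDegree_le hh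
    have htop := dehom_coeff_top hh
    have hge : r ≤ (dehom h).natDegree :=
      Polynomial.le_natDegree_of_ne_zero (by rw [htop, hcc]; exact hc)
    have hnd : (dehom h).natDegree = r := le_antisymm hle hge
    rw [← hcc, ← htop, ← hnd]
    exact hhm.coeff_natDegree
  -- y does not divide h
  have hX1h : ¬ (X 1 : MvPolynomial (Fin 2) k) ∣ h := by
    intro hd
    apply hpy
    have h1 : (X 1 : MvPolynomial (Fin 2) k) ∣ C c * p := by
      rw [← heq]
      exact dvd_sub (hd.mul_left _) (dvd_mul_right _ _)
    have h2 := h1.mul_left (C c⁻¹)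
    rwa [← mul_assoc, ← C_mul, inv_mul_cancel₀ hc, C_1, one_mul] at h2
  have hrel1 : IsRelPrime h (X 1 : MvPolynomial (Fin 2) k) :=
    (prime_X1.irreducible.isRelPrime_iff_not_dvd.mpr hX1h).symm
  have hrelp : IsRelPrime h p := by
    intro d hdh hdp
    have hdvd : d ∣ X 1 * g := by
      have hXg : X 1 * g = X 0 * h - C c * p := by linear_combination -heq
      rw [hXg]
      exact dvd_sub (hdh.mul_left _) (hdp.mul_left _)
    have hd1 : IsRelPrime d (X 1 : MvPolynomial (Fin 2) k) := hrel1.of_dvd_left hdh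
    have hdg : d ∣ g := hd1.dvd_of_dvd_mul_left hdvd
    exact hcop hdg hdh
  refine ⟨hc1, hrel1.mul_right hrelp, ?_⟩
  rw [hc1, C_1, one_mul] at heq
  linear_combination -heq
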